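/- Let E be a normed vector space over ℝ (or ℂ), A : E → E an injective continuous linear map, and suppose there exist constants C > 0 and 0 < r < 1 such that ‖A^n‖ ≤ C r^n for all n ∈ ℕ. Let Y be a finite subset of E. Then there exists n₀ ∈ ℕ such that whenever ∑_{l=1}^{k} A^{n(l-1)} y_l = 0 for some y_1, …, y_k ∈ Y, some n ≥ n₀ and some k ∈ ℕ, we have y_1 = … = y_k = 0. -/
import Mathlib


/-- Let `E` be a real normed vector space, `A : E → E` an injective continuous
linear map with `‖A^n‖ ≤ C r^n` for some `C > 0`, `0 < r < 1`, and all `n ∈ ℕ`. Let `Y` be a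
finite subset of `E`. Then there exists `n₀` such that whenever
`∑_{l=1}^{k} A^{n(l-1)} y_l = 0` for `y_1, …, y_k ∈ Y`, `n ≥ n₀`, `k ∈ ℕ`, we have
`y_1 = … = y_k = 0`. -/
theorem statement4 {E : Type*} [NormedAddCommGroup E] [NormedSpace ℝ E]
    (A : E →L[ℝ] E) (hinj : Function.Injective A)
    (C r : ℝ) (hC : 0 < C) (hr0 : 0 < r) (hr1 : r < 1)
    (hbound : ∀ n : ℕ, ‖A ^ n‖ ≤ C * r ^ n)
    (Y : Finset E) :
    ∃ n₀ : ℕ, ∀ n ≥ n₀, ∀ k : ℕ, ∀ y : Fin k → E, (∀ l, y l ∈ Y) →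
      (∑ l : Fin k, (A ^ (n * (l : ℕ))) (y l)) = 0 → ∀ l, y l = 0 := by
  classical
  have hApow : ∀ n : ℕ, Function.Injective ⇑(A ^ n) := by
    intro n
    induction n with
    | zero => simpa using Function.injective_id
    | succ n ih =>
      intro x z hxz
      rw [pow_succ] at hxz
      simp only [ContinuousLinearMap.mul_apply] at hxz
      exact hinj (ih hxz)
  by_cases hSe : (Y.erase 0).Nonempty
  · have hYne : Y.Nonempty := hSe.mono (Finset.erase_subset _ _)
    set m := (Y.erase 0).inf' hSe (fun x => ‖x‖) with hm
    have hmpos : 0 < m := by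
      rw [hm, Finset.lt_inf'_iff]
      intro b hb
      exact norm_pos_iff.2 (Finset.mem_erase.1 hb).1
    have hmle : ∀ y ∈ Y, y ≠ 0 → m ≤ ‖y‖ := fun y hy hy0 =>
      Finset.inf'_le _ (Finset.mem_erase.2 ⟨hy0, hy⟩)
    set M := Y.sup' hYne (fun x => ‖x‖) with hM
    have hMle : ∀ y ∈ Y, ‖y‖ ≤ M := fun y hy => Finset.le_sup' _ hy
    have hM0 : 0 ≤ M := le_trans (norm_nonneg _) (hMle _ hYne.choose_spec)
    have h1r : 0 < 1 - r := by linarith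
    set D := C * (M + 1) / (1 - r) with hD
    have hDpos : 0 < D := by positivity
    obtain ⟨n₀, hn₀⟩ := exists_pow_lt_of_lt_one (div_pos hmpos hDpos) hr1
    refine ⟨n₀ + 1, fun n hn k => ?_⟩
    have hn1 : 1 ≤ n := le_trans (Nat.le_add_left 1 n₀) hn
    have hrn : r ^ n < m / D :=
      lt_of_le_of_lt
        (pow_le_pow_of_le_one hr0.le hr1.le (le_trans (Nat.le_succ n₀) hn)) hn₀
    induction k with
    | zero => intro y _ _ l; exact l.elim0
    | succ k ih =>
      intro y hy hsum
      -- first component is zero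
      have hy0 : y 0 = 0 := by
        by_contra h0
        have hsum' : y 0 = -∑ l : Fin k, (A ^ (n * ((l.succ : Fin (k+1)) : ℕ))) (y l.succ) := by
          have h := hsum
          rw [Fin.sum_univ_succ] at h
          simp only [Fin.val_zero, Nat.mul_zero, pow_zero, ContinuousLinearMap.one_apply] at h
          exact eq_neg_of_add_eq_zero_left h
        have hle : ‖y 0‖ ≤ ∑ l : Fin k, C * (M + 1) * (r ^ n * r ^ (l : ℕ)) := by
          rw [hsum', norm_neg]
          refine le_trans (norm_sum_le _ _) (Finset.sum_le_sum fun l _ => ?_)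
          have h4 : r ^ (n * ((l : ℕ) + 1)) ≤ r ^ n * r ^ (l : ℕ) := by
            rw [show n * ((l : ℕ) + 1) = n + n * (l : ℕ) by ring, pow_add]
            exact mul_le_mul_of_nonneg_left
              (pow_le_pow_of_le_one hr0.le hr1.le
                (Nat.le_mul_of_pos_left _ (by omega))) (pow_nonneg hr0.le n)
          calc ‖(A ^ (n * ((l.succ : Fin (k+1)) : ℕ))) (y l.succ)‖
              ≤ ‖A ^ (n * ((l.succ : Fin (k+1)) : ℕ))‖ * ‖y l.succ‖ :=
                ContinuousLinearMap.le_opNorm _ _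
            _ ≤ (C * r ^ (n * ((l : ℕ) + 1))) * (M + 1) := by
                simp only [Fin.val_succ]
                exact mul_le_mul (hbound _) (le_trans (hMle _ (hy _)) (by linarith))
                  (norm_nonneg _) (by positivity)
            _ ≤ (C * (r ^ n * r ^ (l : ℕ))) * (M + 1) := by
                have := mul_le_mul_of_nonneg_left h4 hC.le
                nlinarith
            _ = C * (M + 1) * (r ^ n * r ^ (l : ℕ)) := by ring
        have hgeo : ∑ l : Fin k, C * (M + 1) * (r ^ n * r ^ (l : ℕ)) < m := by
          have hsum_le : ∑ l : Fin k, r ^ (l : ℕ) ≤ (1 - r)⁻¹ := by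
            rw [Fin.sum_univ_eq_sum_range]
            exact
              (Summable.sum_le_tsum (Finset.range k) (fun i _ => pow_nonneg hr0.le i)
                (summable_geometric_of_lt_one hr0.le hr1)).trans
                (le_of_eq (tsum_geometric_of_lt_one hr0.le hr1))
          have h5 : ∑ l : Fin k, C * (M + 1) * (r ^ n * r ^ (l : ℕ))
              = C * (M + 1) * r ^ n * ∑ l : Fin k, r ^ (l : ℕ) := by
            rw [Finset.mul_sum]; apply Finset.sum_congr rfl; intro l _; ring
          rw [h5]
          have h6 : C * (M + 1) * r ^ n * ∑ l : Fin k, r ^ (l : ℕ)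
              ≤ C * (M + 1) * r ^ n * (1 - r)⁻¹ := by
            apply mul_le_mul_of_nonneg_left hsum_le
            positivity
          have h7 : C * (M + 1) * r ^ n * (1 - r)⁻¹ = D * r ^ n := by
            rw [hD]; field_simp
          have h8 : D * r ^ n < m := by
            have := (lt_div_iff₀' hDpos).1 hrn
            linarith
          linarith
        have := hmle _ (hy 0) h0
        linarith
      -- the remaining sum is zero, apply injectivity of A ^ n and the IH
      have hsum2 : ∑ l : Fin k, (A ^ (n * (l : ℕ))) (y l.succ) = 0 := by
        apply hApow n
        rw [map_sum, map_zero]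
        have heq : ∀ l : Fin k,
            (A ^ n) ((A ^ (n * (l : ℕ))) (y l.succ))
              = (A ^ (n * ((l.succ : Fin (k+1)) : ℕ))) (y l.succ) := by
          intro l
          rw [← ContinuousLinearMap.mul_apply, ← pow_add]
          congr 2
          simp [Fin.val_succ, Nat.mul_add, Nat.add_comm]
        rw [Finset.sum_congr rfl fun l _ => heq l]
        have h := hsum
        rw [Fin.sum_univ_succ] at h
        simpa [hy0] using h
      have hall := ih (fun l => y l.succ) (fun l => hy _) hsum2
      intro l
      exact Fin.cases hy0 (fun i => hall i) l
  · refine ⟨1, fun n _ k y hy _ l => ?_⟩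
    by_contra h
    exact hSe ⟨y l, Finset.mem_erase.2 ⟨h, hy l⟩⟩
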